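/- Every straight node is a corner node: if N ≥ 1 and i is an index with 1 ≤ i ≤ 4^N−2 such that h_N(i+1) − h_N(i) = h_N(i) − h_N(i−1) (the curve passes straight through node i), then i mod 4 ∈ {0, 3}. -/

import Mathlib

/-- The `N`-th order approximated Hilbert curve, mapping indices `{0,...,4^N-1}`
to nodes of the grid `{0,...,2^N-1} × {0,...,2^N-1} ⊆ ℤ × ℤ`. -/
def hilbert : ℕ → ℕ → ℤ × ℤ
  | 0, _ => (0, 0)
  | 1, i =>
    if i = 0 then (0, 0)
    else if i = 1 then (0, 1)
    else if i = 2 then (1, 1)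
    else (1, 0)
  | N + 2, i =>
    let q := i / 4 ^ (N + 1)
    let s : ℤ := 2 ^ (N + 1)
    let p := hilbert (N + 1) (i % 4 ^ (N + 1))
    if q = 0 then (p.2, p.1)
    else if q = 1 then (p.1, p.2 + s)
    else if q = 2 then (p.1 + s, p.2 + s)
    else (2 * s - 1 - p.2, s - 1 - p.1)

/-- Euclidean distance between two points of `ℤ × ℤ`. -/
noncomputable def euclDist (a b : ℤ × ℤ) : ℝ :=
  Real.sqrt (((a.1 - b.1 : ℤ) : ℝ) ^ 2 + ((a.2 - b.2 : ℤ) : ℝ) ^ 2)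

/-- Two points of `ℤ × ℤ` are edge connected if their Euclidean distance equals 1. -/
def EdgeConnected (a b : ℤ × ℤ) : Prop := euclDist a b = 1

/-- Two points of `ℤ × ℤ` are vertex connected if both coordinates differ by exactly 1. -/
def VertexConnected (a b : ℤ × ℤ) : Prop := |a.1 - b.1| = 1 ∧ |a.2 - b.2| = 1

/-- Membership in the grid `{0,...,2^N-1} × {0,...,2^N-1}`. -/
def InGrid (N : ℕ) (p : ℤ × ℤ) : Prop :=
  0 ≤ p.1 ∧ p.1 ≤ 2 ^ N - 1 ∧ 0 ≤ p.2 ∧ p.2 ≤ 2 ^ N - 1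

/-- The closed segment from `u` to `v` (centres of cells, viewed in `ℝ²`) is disjoint
from the open unit cell centred at `c`. -/
def SegAvoidsCell (u v c : ℤ × ℤ) : Prop :=
  ∀ t : ℝ, t ∈ Set.Icc (0 : ℝ) 1 →
    ¬ (|(1 - t) * (u.1 : ℝ) + t * (v.1 : ℝ) - (c.1 : ℝ)| < 1 / 2 ∧
       |(1 - t) * (u.2 : ℝ) + t * (v.2 : ℝ) - (c.2 : ℝ)| < 1 / 2)

/-- An evasion tour for the blocked index set `B` on the `N`-th order Hilbert grid:
a sequence of waypoints `w 0, ..., w m` in the grid, starting at the entry node,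
ending at the exit node, avoiding all blocked nodes, covering every unblocked grid
point, and whose straight-line segments avoid the interiors of all blocked cells. -/
def IsEvasionTour (N : ℕ) (B : Finset ℕ) (m : ℕ) (w : ℕ → ℤ × ℤ) : Prop :=
  w 0 = hilbert N 0 ∧
  w m = hilbert N (4 ^ N - 1) ∧
  (∀ j ≤ m, InGrid N (w j)) ∧
  (∀ j ≤ m, ∀ b ∈ B, w j ≠ hilbert N b) ∧
  (∀ p : ℤ × ℤ, InGrid N p → (∀ b ∈ B, p ≠ hilbert N b) → ∃ j ≤ m, w j = p) ∧
  (∀ j < m, ∀ b ∈ B, SegAvoidsCell (w j) (w (j + 1)) (hilbert N b))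

lemma hilbert_add (N q r : ℕ) (hr : r < 4 ^ (N + 1)) :
    hilbert (N + 2) (4 ^ (N + 1) * q + r) =
      (let s : ℤ := 2 ^ (N + 1); let p := hilbert (N + 1) r;
       if q = 0 then (p.2, p.1) else if q = 1 then (p.1, p.2 + s)
       else if q = 2 then (p.1 + s, p.2 + s) else (2 * s - 1 - p.2, s - 1 - p.1)) := by
  have hpos : 0 < 4 ^ (N + 1) := Nat.pow_pos (by norm_num)
  have hd : (4 ^ (N + 1) * q + r) / 4 ^ (N + 1) = q := by
    rw [Nat.mul_add_div hpos, Nat.div_eq_of_lt hr, add_zero]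
  have hm : (4 ^ (N + 1) * q + r) % 4 ^ (N + 1) = r := by
    rw [Nat.mul_add_mod, Nat.mod_eq_of_lt hr]
  simp only [hilbert, hd, hm]

lemma hilbert_key : ∀ N i : ℕ, (i % 4 = 1 ∨ i % 4 = 2) → i + 1 < 4 ^ (N + 1) →
    hilbert (N + 1) (i + 1) - hilbert (N + 1) i ≠
      hilbert (N + 1) i - hilbert (N + 1) (i - 1) := by
  intro N
  induction N with
  | zero =>
    intro i hm hlt
    have hub : i ≤ 2 := by norm_num at hlt; omega
    interval_cases i <;> simp_all <;> decide
  | succ N ih =>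
    intro i hm hlt
    set M := 4 ^ (N + 1) with hM
    have hMdvd : 4 ∣ M := dvd_pow_self 4 (Nat.succ_ne_zero N)
    have hMpos : 0 < M := Nat.pow_pos (by norm_num)
    have hM4 : 4 ≤ M := Nat.le_of_dvd hMpos hMdvd
    set r := i % M with hrdef
    set q := i / M with hqdef
    have hdm : M * q + r = i := Nat.div_add_mod i M
    have hrlt : r < M := Nat.mod_lt _ hMpos
    have hr4 : r % 4 = i % 4 := Nat.mod_mod_of_dvd i hMdvd
    have hr0 : r ≠ 0 := by omega
    have hrM : r ≠ M - 1 := by omega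
    have e1 : i + 1 = M * q + (r + 1) := by omega
    have e2 : i = M * q + r := by omega
    have e3 : i - 1 = M * q + (r - 1) := by omega
    rw [show N + 1 + 1 = N + 2 from rfl, e3, e1, e2,
      hilbert_add N q (r + 1) (by omega), hilbert_add N q r (by omega),
      hilbert_add N q (r - 1) (by omega)]
    have hih := ih r (by omega) (by omega)
    set a := hilbert (N + 1) (r + 1)
    set b := hilbert (N + 1) r
    set c := hilbert (N + 1) (r - 1)
    intro h
    apply hih
    rw [Prod.ext_iff] at h ⊢
    simp only [Prod.fst_sub, Prod.snd_sub] at h ⊢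
    split_ifs at h <;>
      simp only [Prod.fst_sub, Prod.snd_sub] at h <;>
      obtain ⟨h1, h2⟩ := h <;> constructor <;> linarith

theorem hilbert_straight_is_corner (N i : ℕ) (hN : 1 ≤ N) (h1 : 1 ≤ i)
    (h2 : i ≤ 4 ^ N - 2)
    (hstraight : hilbert N (i + 1) - hilbert N i = hilbert N i - hilbert N (i - 1)) :
    i % 4 = 0 ∨ i % 4 = 3 := by
  obtain ⟨N', rfl⟩ : ∃ M, N = M + 1 := ⟨N - 1, by omega⟩
  by_contra hcon
  push_neg at hcon
  have hm : i % 4 = 1 ∨ i % 4 = 2 := by omega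
  have h4 : 4 ≤ 4 ^ (N' + 1) :=
    Nat.le_of_dvd (Nat.pow_pos (by norm_num)) (dvd_pow_self 4 (Nat.succ_ne_zero N'))
  exact hilbert_key N' i hm (by omega) hstraight
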